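/- Let (S, 𝓕) be a measurable space, let P₁ and Q₁ be probability measures on it with Q₁ ≪ P₁, and let α > 1. For n ∈ ℕ, let Pₙ and Qₙ denote the n-fold product measures of P₁ and Q₁ on Sⁿ. Then for every measurable set Aₙ ⊆ Sⁿ with Qₙ(Aₙ) > 0, one has (1/n)·log Qₙ(Aₙ) ≤ ((α−1)/α)·(1/n)·log Pₙ(Aₙ) + (α−1)·R_α(Q₁‖P₁). -/

import Mathlib

open MeasureTheory Classical
open scoped ENNReal

/-- The Rényi divergence of degree `α` of `Q` with respect to `P`:
`R_α(Q‖P) = (1/(α(α−1)))·log ∫ (dQ/dP)^α dP` if `Q ≪ P`, and `+∞` otherwise. -/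
noncomputable def renyiDiv {S : Type*} [MeasurableSpace S] (α : ℝ)
    (Q P : Measure S) : EReal :=
  if Q ≪ P then
    (((α * (α - 1))⁻¹ : ℝ) : EReal) * ENNReal.log (∫⁻ x, Q.rnDeriv P x ^ α ∂P)
  else ⊤

section Aux

open ENNReal

lemma lintegral_pi_prod_aux {S : Type*} [MeasurableSpace S] (μ : Measure S) [SigmaFinite μ] :
    ∀ {n : ℕ} (φ : Fin n → S → ℝ≥0∞), (∀ i, Measurable (φ i)) →
    ∫⁻ x, ∏ i, φ i (x i) ∂(Measure.pi fun _ : Fin n => μ) = ∏ i, ∫⁻ y, φ i y ∂μ := by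
  intro n
  induction n with
  | zero =>
    intro φ hφ
    simp [lintegral_const, Measure.pi_empty_univ]
  | succ n ih =>
    intro φ hφ
    have h := (measurePreserving_piFinSuccAbove (fun _ : Fin (n+1) => μ) 0).symm
    rw [← h.lintegral_comp_emb (MeasurableEquiv.measurableEmbedding _)]
    simp_rw [MeasurableEquiv.piFinSuccAbove_symm_apply, Fin.insertNthEquiv,
      Fin.prod_univ_succ, Fin.insertNth_zero]
    simp only [Fin.zero_succAbove, cast_eq, Function.comp_def, Fin.cons_zero, Fin.cons_succ,
      Equiv.coe_fn_mk]
    have hmg : Measurable (fun y : Fin n → S => ∏ j : Fin n, φ j.succ (y j)) :=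
      Finset.measurable_prod Finset.univ fun j _ => (hφ j.succ).comp (measurable_pi_apply j)
    have key := lintegral_prod_mul (μ := μ) (ν := Measure.pi fun _ : Fin n => μ)
      (f := φ 0) (g := fun y : Fin n → S => ∏ j : Fin n, φ j.succ (y j))
      (hφ 0).aemeasurable hmg.aemeasurable
    rw [key, ih (fun j => φ j.succ) (fun j => hφ _)]

lemma pi_withDensity_rnDeriv_aux {S : Type*} [MeasurableSpace S] (P Q : Measure S)
    [IsProbabilityMeasure P] [IsProbabilityMeasure Q] (hQP : Q ≪ P) (n : ℕ) :
    Measure.pi (fun _ : Fin n => Q) =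
      (Measure.pi fun _ : Fin n => P).withDensity fun x => ∏ i, Q.rnDeriv P (x i) := by
  have hf : Measurable (Q.rnDeriv P) := Measure.measurable_rnDeriv Q P
  refine Measure.pi_eq fun s hs => ?_
  rw [withDensity_apply _ (MeasurableSet.univ_pi hs),
    ← lintegral_indicator (MeasurableSet.univ_pi hs)]
  have hind : ∀ x : Fin n → S, (Set.pi Set.univ s).indicator
      (fun x => ∏ i, Q.rnDeriv P (x i)) x = ∏ i, (s i).indicator (Q.rnDeriv P) (x i) := by
    intro x
    by_cases hx : x ∈ Set.pi Set.univ s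
    · rw [Set.indicator_of_mem hx]
      refine Finset.prod_congr rfl fun i _ => ?_
      rw [Set.indicator_of_mem (hx i (Set.mem_univ i))]
    · rw [Set.indicator_of_notMem hx]
      rw [Set.mem_univ_pi, not_forall] at hx
      obtain ⟨i, hi⟩ := hx
      exact (Finset.prod_eq_zero (Finset.mem_univ i)
        (Set.indicator_of_notMem hi _)).symm
  simp_rw [hind]
  rw [lintegral_pi_prod_aux P (fun i => (s i).indicator (Q.rnDeriv P)) fun i =>
    hf.indicator (hs i)]
  refine Finset.prod_congr rfl fun i _ => ?_
  rw [lintegral_indicator (hs i), Measure.setLIntegral_rnDeriv hQP]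

end Aux

/-- Robust Rényi bound under IID scaling: if `Q₁ ≪ P₁` and `α > 1`, then for the
`n`-fold product measures and any measurable `Aₙ ⊆ Sⁿ` with `Qₙ(Aₙ) > 0`,
`(1/n)·log Qₙ(Aₙ) ≤ ((α−1)/α)·(1/n)·log Pₙ(Aₙ) + (α−1)·R_α(Q₁‖P₁)`. -/
theorem renyi_iid_scaling_bound {S : Type*} [MeasurableSpace S]
    (P₁ Q₁ : Measure S) [IsProbabilityMeasure P₁] [IsProbabilityMeasure Q₁]
    (hQP : Q₁ ≪ P₁) (α : ℝ) (hα : 1 < α) (n : ℕ)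
    (A : Set (Fin n → S)) (hA : MeasurableSet A)
    (hQA : 0 < Measure.pi (fun _ : Fin n => Q₁) A) :
    (((n : ℝ)⁻¹ * Real.log ((Measure.pi (fun _ : Fin n => Q₁)) A).toReal : ℝ) : EReal) ≤
      (((α - 1) / α * ((n : ℝ)⁻¹
          * Real.log ((Measure.pi (fun _ : Fin n => P₁)) A).toReal) : ℝ) : EReal)
        + (((α - 1 : ℝ)) : EReal) * renyiDiv α Q₁ P₁ := by
  have hα0 : (0:ℝ) < α := lt_trans one_pos hα
  have hα1 : (0:ℝ) < α - 1 := by linarith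
  set f := Q₁.rnDeriv P₁ with hfdef
  have hf : Measurable f := Measure.measurable_rnDeriv Q₁ P₁
  set I := ∫⁻ y, f y ^ α ∂P₁ with hIdef
  have hpq : α.HolderConjugate (α / (α - 1)) := Real.HolderConjugate.conjExponent hα
  have hinvq : 1 / (α / (α - 1)) = (α - 1) / α := by rw [one_div, inv_div]
  have hq0 : 0 < α / (α - 1) := div_pos hα0 hα1
  have hfα : Measurable fun y => f y ^ α := hf.pow_const α
  -- Jensen: 1 ≤ I
  have hone : ∫⁻ y, f y ∂P₁ = 1 := by
    rw [Measure.lintegral_rnDeriv hQP]; exact measure_univ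
  have hI1 : (1 : ℝ≥0∞) ≤ I := by
    have h := ENNReal.lintegral_mul_le_Lp_mul_Lq P₁ hpq hf.aemeasurable
      (aemeasurable_const (b := (1:ℝ≥0∞)))
    simp only [Pi.mul_apply, mul_one] at h
    rw [hone] at h
    simp only [ENNReal.one_rpow, lintegral_one, measure_univ] at h
    rw [mul_one] at h
    by_contra hlt
    push_neg at hlt
    have h2 := ENNReal.rpow_lt_rpow hlt (by positivity : (0:ℝ) < 1/α)
    rw [ENNReal.one_rpow] at h2
    rw [← hIdef] at h
    exact absurd h (not_le.mpr h2)
  set Pn := Measure.pi (fun _ : Fin n => P₁) with hPn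
  set Qn := Measure.pi (fun _ : Fin n => Q₁) with hQn
  have hgm : Measurable fun x : Fin n → S => ∏ i, f (x i) :=
    Finset.measurable_prod Finset.univ fun i _ => hf.comp (measurable_pi_apply i)
  have hQnA : Qn A = ∫⁻ x, (∏ i, f (x i)) * A.indicator (1 : (Fin n → S) → ℝ≥0∞) x ∂Pn := by
    rw [hQn, pi_withDensity_rnDeriv_aux P₁ Q₁ hQP n, withDensity_apply _ hA,
      ← lintegral_indicator hA]
    congr 1
    ext x
    by_cases hx : x ∈ A
    · simp [hx, hfdef]
    · simp [hx]
  have hgα : ∫⁻ x, (∏ i, f (x i)) ^ α ∂Pn = I ^ n := by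
    have hpr : ∀ x : Fin n → S, (∏ i, f (x i)) ^ α = ∏ i, f (x i) ^ α := fun x =>
      (ENNReal.prod_rpow_of_nonneg (le_of_lt hα0)).symm
    simp only [hpr]
    rw [lintegral_pi_prod_aux P₁ (fun _ y => f y ^ α) fun _ => hfα, ← hIdef]
    simp [Finset.prod_const]
  have hind : ∫⁻ x, (A.indicator (1 : (Fin n → S) → ℝ≥0∞) x) ^ (α/(α-1)) ∂Pn = Pn A := by
    have hpt : ∀ x, (A.indicator (1 : (Fin n → S) → ℝ≥0∞) x) ^ (α/(α-1))
        = A.indicator 1 x := by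
      intro x; by_cases hx : x ∈ A <;> simp [hx, ENNReal.zero_rpow_of_pos hq0]
    simp only [hpt]
    rw [lintegral_indicator hA]
    simp
  have key : Qn A ≤ (I ^ n) ^ (1/α) * (Pn A) ^ ((α-1)/α) := by
    rw [hQnA]
    calc ∫⁻ x, (∏ i, f (x i)) * A.indicator (1 : (Fin n → S) → ℝ≥0∞) x ∂Pn
        ≤ (∫⁻ x, (∏ i, f (x i)) ^ α ∂Pn) ^ (1/α)
          * (∫⁻ x, (A.indicator (1 : (Fin n → S) → ℝ≥0∞) x) ^ (α/(α-1)) ∂Pn) ^ (1/(α/(α-1))) :=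
          ENNReal.lintegral_mul_le_Lp_mul_Lq Pn hpq hgm.aemeasurable
            ((measurable_one.indicator hA).aemeasurable)
      _ = (I ^ n) ^ (1/α) * (Pn A) ^ ((α-1)/α) := by rw [hgα, hind, hinvq]
  by_cases hItop : I = ⊤
  · have hren : renyiDiv α Q₁ P₁ = ⊤ := by
      rw [renyiDiv, if_pos hQP, ← hfdef, ← hIdef, hItop, ENNReal.log_top,
        EReal.coe_mul_top_of_pos]
      positivity
    rw [hren, EReal.mul_top_of_pos, EReal.add_top_of_ne_bot (EReal.coe_ne_bot _)]
    · exact le_top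
    · exact_mod_cast hα1
  · have hI0 : I ≠ 0 := by
      intro h
      rw [h] at hI1
      exact absurd hI1 (by simp)
    set Ir := I.toReal with hIr
    have hIr1 : (1:ℝ) ≤ Ir := by
      have := ENNReal.toReal_mono hItop hI1
      simpa using this
    have hQA1 : Qn A ≤ 1 := prob_le_one
    have hQAtop : Qn A ≠ ⊤ := (lt_of_le_of_lt hQA1 ENNReal.one_lt_top).ne
    have hPA1 : Pn A ≤ 1 := prob_le_one
    have hPAtop : Pn A ≠ ⊤ := (lt_of_le_of_lt hPA1 ENNReal.one_lt_top).ne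
    have hPA0 : Pn A ≠ 0 := by
      intro h
      rw [h, ENNReal.zero_rpow_of_pos (by positivity), mul_zero] at key
      exact absurd (le_antisymm key zero_le) hQA.ne'
    set q := (Qn A).toReal with hq
    set p := (Pn A).toReal with hp
    have hq0' : 0 < q := ENNReal.toReal_pos hQA.ne' hQAtop
    have hp0' : 0 < p := ENNReal.toReal_pos hPA0 hPAtop
    have hIrpos : (0:ℝ) < Ir := lt_of_lt_of_le one_pos hIr1
    have hRHStop : (I ^ n) ^ (1/α) * (Pn A) ^ ((α-1)/α) ≠ ⊤ :=
      ENNReal.mul_ne_top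
        (ENNReal.rpow_ne_top_of_nonneg (by positivity) (ENNReal.pow_ne_top hItop))
        (ENNReal.rpow_ne_top_of_nonneg (by positivity) hPAtop)
    have hreal : q ≤ (Ir ^ n) ^ (1/α) * p ^ ((α-1)/α) := by
      have h := ENNReal.toReal_mono hRHStop key
      rwa [ENNReal.toReal_mul, ← ENNReal.toReal_rpow, ← ENNReal.toReal_rpow,
        ENNReal.toReal_pow] at h
    have hlog : Real.log q ≤ (1/α) * ((n:ℝ) * Real.log Ir) + (α-1)/α * Real.log p := by
      have h1 := Real.log_le_log hq0' hreal
      rwa [Real.log_mul (by positivity) (by positivity), Real.log_rpow (by positivity),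
        Real.log_rpow hp0', Real.log_pow] at h1
    have hren : renyiDiv α Q₁ P₁ = (((α*(α-1))⁻¹ * Real.log Ir : ℝ) : EReal) := by
      rw [renyiDiv, if_pos hQP, ← hfdef, ← hIdef, ENNReal.log_pos_real hI0 hItop,
        ← hIr, ← EReal.coe_mul]
    rw [hren, ← EReal.coe_mul, ← EReal.coe_add, EReal.coe_le_coe_iff]
    rcases Nat.eq_zero_or_pos n with hn | hn
    · subst hn
      simp only [Nat.cast_zero, inv_zero, zero_mul, mul_zero, zero_add]
      have hL : 0 ≤ Real.log Ir := Real.log_nonneg hIr1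
      exact mul_nonneg (by linarith) (mul_nonneg (by positivity) hL)
    · have hn0 : (n:ℝ) ≠ 0 := Nat.cast_ne_zero.mpr hn.ne'
      have hc : (α-1) * ((α*(α-1))⁻¹ * Real.log Ir) = α⁻¹ * Real.log Ir := by
        field_simp
      have expand : ((n:ℝ))⁻¹ * ((1/α) * ((n:ℝ) * Real.log Ir) + (α-1)/α * Real.log p)
          = (α-1)/α * (((n:ℝ))⁻¹ * Real.log p) + α⁻¹ * Real.log Ir := by
        field_simp
        ring
      rw [hc]
      calc ((n:ℝ))⁻¹ * Real.log q
          ≤ ((n:ℝ))⁻¹ * ((1/α) * ((n:ℝ) * Real.log Ir) + (α-1)/α * Real.log p) :=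
            mul_le_mul_of_nonneg_left hlog (by positivity)
        _ = (α-1)/α * (((n:ℝ))⁻¹ * Real.log p) + α⁻¹ * Real.log Ir := expand
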